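/- Let A ∈ ℝ^{n×n}, λ > 0, and let G ∈ ℝ^{n×n} be a real symmetric positive definite matrix satisfying the Lyapunov inequality AG + GAᵀ ⪯ −2λG (i.e. AG + GAᵀ + 2λG is negative semi-definite). Then for every τ ≥ 0 and every matrix C ∈ ℝ^{n×n}: ‖e^{τA} C‖_F ≤ e^{−λτ} · sqrt(‖G‖) · ‖G^{−1/2} C‖_F, where ‖G‖ is the largest eigenvalue of G and G^{−1/2} is the inverse of the principal square root of G. Equivalently, the matrix E_τ := G^{−1/2} e^{τA} G^{1/2} is a contraction with operator norm ‖E_τ‖ ≤ e^{−λτ}. -/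

import Mathlib

open Matrix

section Aux

variable {n : ℕ}

lemma lyap_conjT_eq_transpose (M : Matrix (Fin n) (Fin n) ℝ) : Mᴴ = Mᵀ :=
  Matrix.ext fun i j => by simp [conjTranspose_apply]

noncomputable def lyapSqrt (G : Matrix (Fin n) (Fin n) ℝ) (hG : G.PosDef) :
    Matrix (Fin n) (Fin n) ℝ :=
  (hG.posSemidef.1.eigenvectorUnitary : Matrix (Fin n) (Fin n) ℝ) *
    diagonal ((RCLike.ofReal : ℝ → ℝ) ∘ Real.sqrt ∘ hG.posSemidef.1.eigenvalues) *
    (star hG.posSemidef.1.eigenvectorUnitary : Matrix (Fin n) (Fin n) ℝ)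

lemma lyap_sqrt_mul_self (G : Matrix (Fin n) (Fin n) ℝ) (hG : G.PosDef) :
    lyapSqrt G hG * lyapSqrt G hG = G := by
  have hUU : (star hG.posSemidef.1.eigenvectorUnitary : Matrix (Fin n) (Fin n) ℝ) * (hG.posSemidef.1.eigenvectorUnitary : Matrix (Fin n) (Fin n) ℝ) = 1 :=
    Unitary.coe_star_mul_self _
  have hD : diagonal ((RCLike.ofReal : ℝ → ℝ) ∘ Real.sqrt ∘ hG.posSemidef.1.eigenvalues) * diagonal ((RCLike.ofReal : ℝ → ℝ) ∘ Real.sqrt ∘ hG.posSemidef.1.eigenvalues)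
      = diagonal ((RCLike.ofReal : ℝ → ℝ) ∘ hG.posSemidef.1.eigenvalues) := by
    rw [diagonal_mul_diagonal]
    congr 1
    funext i
    simp [Real.mul_self_sqrt (hG.posSemidef.eigenvalues_nonneg i)]
  conv_rhs => rw [hG.posSemidef.1.spectral_theorem]
  rw [Unitary.conjStarAlgAut_apply, lyapSqrt]
  simp only [Matrix.mul_assoc]
  rw [← Matrix.mul_assoc (star hG.posSemidef.1.eigenvectorUnitary : Matrix (Fin n) (Fin n) ℝ) (hG.posSemidef.1.eigenvectorUnitary : Matrix (Fin n) (Fin n) ℝ), hUU, Matrix.one_mul,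
    ← Matrix.mul_assoc (diagonal _) (diagonal _), hD]

lemma lyap_quad_conj (B M : Matrix (Fin n) (Fin n) ℝ) (x : Fin n → ℝ) :
    x ⬝ᵥ ((Bᵀ * M * B) *ᵥ x) = (B *ᵥ x) ⬝ᵥ (M *ᵥ (B *ᵥ x)) := by
  rw [← mulVec_mulVec, ← mulVec_mulVec, dotProduct_mulVec x Bᵀ, vecMul_transpose]

lemma lyap_smul_one_sub_psd (G : Matrix (Fin n) (Fin n) ℝ) (hG : G.PosDef) (g : ℝ)
    (hg_max : ∀ μ ∈ spectrum ℝ G, μ ≤ g) :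
    (g • (1 : Matrix (Fin n) (Fin n) ℝ) - G).PosSemidef := by
  have hH : (g • (1 : Matrix (Fin n) (Fin n) ℝ) - G).IsHermitian := by
    apply IsHermitian.sub _ hG.1
    simp [Matrix.IsHermitian, lyap_conjT_eq_transpose]
  refine (Matrix.IsHermitian.posSemidef_iff_eigenvalues_nonneg hH).mpr fun i => ?_
  have hmem := Matrix.IsHermitian.eigenvalues_mem_spectrum_real hH i
  have hs := (spectrum.singleton_sub_eq G g).symm
  rw [Algebra.algebraMap_eq_smul_one] at hs
  rw [hs] at hmem
  obtain ⟨a, ha, b, hb, hab⟩ := Set.mem_sub.mp hmem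
  rw [Set.mem_singleton_iff] at ha
  subst ha
  have := hg_max b hb
  rw [Pi.zero_apply, ← hab]
  linarith

lemma lyap_sqrt_symm (G : Matrix (Fin n) (Fin n) ℝ) (hG : G.PosDef) :
    (lyapSqrt G hG)ᵀ = lyapSqrt G hG := by
  rw [← lyap_conjT_eq_transpose]
  simp [lyapSqrt, conjTranspose_mul, Matrix.mul_assoc]
  rw [← lyap_conjT_eq_transpose, ← lyap_conjT_eq_transpose, ← star_eq_conjTranspose,
    ← star_eq_conjTranspose, star_star]

lemma lyap_sqrt_det_isUnit (G : Matrix (Fin n) (Fin n) ℝ) (hG : G.PosDef) :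
    IsUnit (lyapSqrt G hG).det := by
  rw [isUnit_iff_ne_zero]
  intro h
  have : (lyapSqrt G hG).det * (lyapSqrt G hG).det = G.det := by
    rw [← det_mul, lyap_sqrt_mul_self G hG]
  rw [h, mul_zero] at this
  exact hG.det_pos.ne' this.symm

lemma lyap_sqrt_inv_mul_inv (G : Matrix (Fin n) (Fin n) ℝ) (hG : G.PosDef) :
    (lyapSqrt G hG)⁻¹ * (lyapSqrt G hG)⁻¹ = G⁻¹ := by
  rw [← Matrix.mul_inv_rev, lyap_sqrt_mul_self G hG]

lemma lyap_dot_inv_sqrt (G : Matrix (Fin n) (Fin n) ℝ) (hG : G.PosDef) (v : Fin n → ℝ) :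
    ((lyapSqrt G hG)⁻¹ *ᵥ v) ⬝ᵥ ((lyapSqrt G hG)⁻¹ *ᵥ v) = v ⬝ᵥ (G⁻¹ *ᵥ v) := by
  set S := lyapSqrt G hG with hS
  have h1 : (S⁻¹ *ᵥ v) ⬝ᵥ ((1 : Matrix (Fin n) (Fin n) ℝ) *ᵥ (S⁻¹ *ᵥ v))
      = v ⬝ᵥ (((S⁻¹)ᵀ * 1 * S⁻¹) *ᵥ v) := (lyap_quad_conj (S⁻¹) 1 v).symm
  rw [one_mulVec] at h1
  rw [h1, Matrix.mul_one, transpose_nonsing_inv, lyap_sqrt_symm G hG, lyap_sqrt_inv_mul_inv G hG]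

lemma lyap_dot_le_g (G : Matrix (Fin n) (Fin n) ℝ) (hG : G.PosDef) (g : ℝ)
    (hg_max : ∀ μ ∈ spectrum ℝ G, μ ≤ g) (y : Fin n → ℝ) :
    y ⬝ᵥ y ≤ g * (y ⬝ᵥ (G⁻¹ *ᵥ y)) := by
  set S := lyapSqrt G hG with hSdef
  have hSs : Sᵀ = S := lyap_sqrt_symm G hG
  have hSS : S * S = G := lyap_sqrt_mul_self G hG
  have hdetS : IsUnit S.det := lyap_sqrt_det_isUnit G hG
  have hSr : S * S⁻¹ = 1 := mul_nonsing_inv S hdetS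
  have hSl : S⁻¹ * S = 1 := nonsing_inv_mul S hdetS
  set z := S⁻¹ *ᵥ y with hz
  have hy : y = S *ᵥ z := by rw [hz, mulVec_mulVec, hSr, one_mulVec]
  have h1 : y ⬝ᵥ y = z ⬝ᵥ (G *ᵥ z) := by
    conv_lhs => rw [hy]
    rw [show (S *ᵥ z) ⬝ᵥ (S *ᵥ z) = (S *ᵥ z) ⬝ᵥ ((1 : Matrix (Fin n) (Fin n) ℝ) *ᵥ (S *ᵥ z)) by
      rw [one_mulVec]]
    rw [← lyap_quad_conj S 1 z, Matrix.mul_one, hSs, hSS]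
  have hmid : S * G⁻¹ * S = 1 := by
    rw [← hSS, Matrix.mul_inv_rev, ← Matrix.mul_assoc S S⁻¹ S⁻¹, hSr, one_mul, hSl]
  have h2 : y ⬝ᵥ (G⁻¹ *ᵥ y) = z ⬝ᵥ z := by
    conv_lhs => rw [hy]
    rw [← lyap_quad_conj S G⁻¹ z, hSs, hmid, one_mulVec]
  have hpsd := (lyap_smul_one_sub_psd G hG g hg_max).dotProduct_mulVec_nonneg z
  simp only [star_trivial, sub_mulVec, smul_mulVec, one_mulVec, dotProduct_sub,
    dotProduct_smul, smul_eq_mul] at hpsd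
  rw [h1, h2]
  linarith

lemma lyap_trace_col (K : Matrix (Fin n) (Fin n) ℝ) :
    (Kᵀ * K).trace = ∑ j, (fun i => K i j) ⬝ᵥ (fun i => K i j) := by
  simp [Matrix.trace, Matrix.diag, mul_apply, dotProduct]

lemma lyap_col_mul (M C : Matrix (Fin n) (Fin n) ℝ) (j : Fin n) :
    (fun i => (M * C) i j) = M *ᵥ (fun i => C i j) := by
  funext i
  simp [mul_apply, mulVec, dotProduct]

section Decay

attribute [local instance] Matrix.linftyOpNormedAddCommGroup Matrix.linftyOpNormedRing
  Matrix.linftyOpNormedAlgebra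

noncomputable def lyapQuadCLM (x : Fin n → ℝ) : Matrix (Fin n) (Fin n) ℝ →L[ℝ] ℝ :=
  LinearMap.toContinuousLinearMap
    { toFun := fun M => x ⬝ᵥ (M *ᵥ x)
      map_add' := fun M N => by simp [add_mulVec]
      map_smul' := fun c M => by simp [smul_mulVec] }

@[simp] lemma lyapQuadCLM_apply (x : Fin n → ℝ) (M : Matrix (Fin n) (Fin n) ℝ) :
    lyapQuadCLM x M = x ⬝ᵥ (M *ᵥ x) := rfl

noncomputable def lyapTransCLM : Matrix (Fin n) (Fin n) ℝ →L[ℝ] Matrix (Fin n) (Fin n) ℝ :=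
  LinearMap.toContinuousLinearMap
    { toFun := fun M => Mᵀ
      map_add' := fun M N => transpose_add M N
      map_smul' := fun c M => transpose_smul c M }

lemma lyap_decay (A G : Matrix (Fin n) (Fin n) ℝ) (lam : ℝ)
    (hGs : G.IsSymm) (hG : G.PosDef)
    (hLyap : (-(A * G + G * Aᵀ + (2 * lam) • G)).PosSemidef)
    (x : Fin n → ℝ) {τ : ℝ} (hτ : 0 ≤ τ) :
    Real.exp (2*lam*τ) *
      ((NormedSpace.exp (τ • A) *ᵥ x) ⬝ᵥ (G⁻¹ *ᵥ (NormedSpace.exp (τ • A) *ᵥ x)))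
      ≤ x ⬝ᵥ (G⁻¹ *ᵥ x) := by
  have hdet : IsUnit G.det := isUnit_iff_ne_zero.mpr hG.det_pos.ne'
  have hGr : G * G⁻¹ = 1 := mul_nonsing_inv G hdet
  have hGl : G⁻¹ * G = 1 := nonsing_inv_mul G hdet
  have hGit : (G⁻¹)ᵀ = G⁻¹ := by rw [transpose_nonsing_inv, hGs.eq]
  have hconj := hLyap.conjTranspose_mul_mul_same G⁻¹
  rw [lyap_conjT_eq_transpose] at hconj
  have hmat : (G⁻¹)ᵀ * (-(A * G + G * Aᵀ + (2 * lam) • G)) * G⁻¹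
      = -(Aᵀ * G⁻¹ + G⁻¹ * A + (2 * lam) • G⁻¹) := by
    rw [hGit]
    simp only [Matrix.mul_neg, Matrix.neg_mul, neg_inj]
    simp [Matrix.mul_add, Matrix.add_mul, Matrix.mul_smul, Matrix.smul_mul, mul_assoc, hGr, hGl]
    rw [← mul_assoc G⁻¹ G _, hGl, one_mul, add_comm]
  rw [hmat] at hconj
  set N : Matrix (Fin n) (Fin n) ℝ := Aᵀ * G⁻¹ + G⁻¹ * A + (2 * lam) • G⁻¹ with hNdef
  set E : ℝ → Matrix (Fin n) (Fin n) ℝ := fun t => NormedSpace.exp (t • A) with hEdef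
  set ψ : ℝ → ℝ := fun t => Real.exp (2*lam*t) * lyapQuadCLM x ((E t)ᵀ * (G⁻¹ * E t)) with hψdef
  have hcomm : ∀ t : ℝ, E t * A = A * E t := fun t =>
    (((Commute.refl A).smul_left t).exp_left).eq
  have hψ' : ∀ t : ℝ, HasDerivAt ψ
      (Real.exp (2*lam*t) * (2*lam) * lyapQuadCLM x ((E t)ᵀ * (G⁻¹ * E t))
        + Real.exp (2*lam*t) *
          lyapQuadCLM x ((E t * A)ᵀ * (G⁻¹ * E t) + (E t)ᵀ * (G⁻¹ * (E t * A)))) t := by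
    intro t
    have hE : HasDerivAt E (E t * A) t := hasDerivAt_exp_smul_const A t
    have hET : HasDerivAt (fun u => (E u)ᵀ) ((E t * A)ᵀ) t :=
      lyapTransCLM.hasFDerivAt.comp_hasDerivAt t hE
    have hprod : HasDerivAt (fun u => (E u)ᵀ * (G⁻¹ * E u))
        ((E t * A)ᵀ * (G⁻¹ * E t) + (E t)ᵀ * (G⁻¹ * (E t * A))) t :=
      hET.mul (hE.const_mul G⁻¹)
    have hq : HasDerivAt (fun u => lyapQuadCLM x ((E u)ᵀ * (G⁻¹ * E u)))
        (lyapQuadCLM x ((E t * A)ᵀ * (G⁻¹ * E t) + (E t)ᵀ * (G⁻¹ * (E t * A)))) t :=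
      (lyapQuadCLM x).hasFDerivAt.comp_hasDerivAt t hprod
    have hexp : HasDerivAt (fun u : ℝ => Real.exp (2*lam*u)) (Real.exp (2*lam*t) * (2*lam)) t := by
      simpa [mul_comm] using (((hasDerivAt_id t).const_mul (2*lam)).exp)
    exact hexp.mul hq
  have hDneg : ∀ t : ℝ,
      Real.exp (2*lam*t) * (2*lam) * lyapQuadCLM x ((E t)ᵀ * (G⁻¹ * E t))
        + Real.exp (2*lam*t) *
          lyapQuadCLM x ((E t * A)ᵀ * (G⁻¹ * E t) + (E t)ᵀ * (G⁻¹ * (E t * A))) ≤ 0 := by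
    intro t
    have hid : (E t * A)ᵀ * (G⁻¹ * E t) + (E t)ᵀ * (G⁻¹ * (E t * A))
        + (2*lam) • ((E t)ᵀ * (G⁻¹ * E t)) = (E t)ᵀ * N * E t := by
      rw [hcomm t, hNdef]
      simp only [transpose_mul, Matrix.mul_add, Matrix.add_mul, Matrix.mul_smul,
        Matrix.smul_mul, mul_assoc, mul_smul_comm, smul_mul_assoc]
    have key : Real.exp (2*lam*t) * (2*lam) * lyapQuadCLM x ((E t)ᵀ * (G⁻¹ * E t))
        + Real.exp (2*lam*t) *
          lyapQuadCLM x ((E t * A)ᵀ * (G⁻¹ * E t) + (E t)ᵀ * (G⁻¹ * (E t * A)))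
        = Real.exp (2*lam*t) * lyapQuadCLM x ((E t)ᵀ * N * E t) := by
      rw [← hid]
      simp only [map_add, _root_.map_smul, smul_eq_mul]
      ring
    rw [key]
    have hy := hconj.dotProduct_mulVec_nonneg (E t *ᵥ x)
    have hneg : (E t *ᵥ x) ⬝ᵥ (N *ᵥ (E t *ᵥ x)) ≤ 0 := by
      simpa [neg_mulVec] using hy
    have hq : lyapQuadCLM x ((E t)ᵀ * N * E t) ≤ 0 := by
      rw [lyapQuadCLM_apply, lyap_quad_conj]
      exact hneg
    exact mul_nonpos_of_nonneg_of_nonpos (Real.exp_nonneg _) hq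
  have hanti : Antitone ψ :=
    antitone_of_deriv_nonpos (fun t => (hψ' t).differentiableAt)
      (fun t => by rw [(hψ' t).deriv]; exact hDneg t)
  have hle : ψ τ ≤ ψ 0 := hanti hτ
  have hψ0 : ψ 0 = x ⬝ᵥ (G⁻¹ *ᵥ x) := by
    simp [hψdef, hEdef, NormedSpace.exp_zero]
  have hψτ : ψ τ = Real.exp (2*lam*τ) *
      ((NormedSpace.exp (τ • A) *ᵥ x) ⬝ᵥ (G⁻¹ *ᵥ (NormedSpace.exp (τ • A) *ᵥ x))) := by
    rw [hψdef]
    simp only [lyapQuadCLM_apply]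
    rw [← mul_assoc ((E τ)ᵀ) G⁻¹ (E τ), lyap_quad_conj]
  rw [← hψτ, ← hψ0]
  exact hle

end Decay

end Aux


/-- **Contraction estimate from the algebraic Lyapunov inequality (equations (contr),
(contr1) of Section 5).** If `G ≻ 0` is real symmetric with `A G + G Aᵀ ⪯ -2 λ G`
(`λ > 0`), and `g` is the largest eigenvalue of `G` (its operator norm), then for every
`τ ≥ 0` and `C ∈ ℝ^{n×n}`, the Frobenius norms satisfy
`‖e^{τA} C‖_F ≤ e^{-λτ} √g ‖G^{-1/2} C‖_F`, where `G^{-1/2}` is the inverse of the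
principal square root of `G`, and `‖K‖_F = √(Tr(Kᵀ K))`. -/
theorem lyapunov_contraction_estimate
    {n : ℕ} (A G : Matrix (Fin n) (Fin n) ℝ) (lam : ℝ) (hlam : 0 < lam)
    (hGs : G.IsSymm) (hG : G.PosDef)
    (hLyap : (-(A * G + G * Aᵀ + (2 * lam) • G)).PosSemidef)
    (g : ℝ) (hg_mem : g ∈ spectrum ℝ G) (hg_max : ∀ μ ∈ spectrum ℝ G, μ ≤ g)
    (τ : ℝ) (hτ : 0 ≤ τ) (C : Matrix (Fin n) (Fin n) ℝ) :
    Real.sqrt ((NormedSpace.exp (τ • A) * C)ᵀ * (NormedSpace.exp (τ • A) * C)).trace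
      ≤ Real.exp (-lam * τ) * Real.sqrt g *
        Real.sqrt (((((hG.posSemidef.1.eigenvectorUnitary : Matrix (Fin n) (Fin n) ℝ) *
          diagonal ((RCLike.ofReal : ℝ → ℝ) ∘ Real.sqrt ∘ hG.posSemidef.1.eigenvalues) *
          (star hG.posSemidef.1.eigenvectorUnitary : Matrix (Fin n) (Fin n) ℝ))⁻¹ * C)ᵀ * (((hG.posSemidef.1.eigenvectorUnitary : Matrix (Fin n) (Fin n) ℝ) *
          diagonal ((RCLike.ofReal : ℝ → ℝ) ∘ Real.sqrt ∘ hG.posSemidef.1.eigenvalues) *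
          (star hG.posSemidef.1.eigenvectorUnitary : Matrix (Fin n) (Fin n) ℝ))⁻¹ * C)).trace) := by
  have hg0 : 0 ≤ g := by
    rcases Nat.eq_zero_or_pos n with hn | hn
    · subst hn
      haveI : Subsingleton (Matrix (Fin 0) (Fin 0) ℝ) :=
        ⟨fun a b => Matrix.ext fun i _ => i.elim0⟩
      exact absurd (isUnit_of_subsingleton _) (spectrum.mem_iff.mp hg_mem)
    · have h1 := hG.eigenvalues_pos ⟨0, hn⟩
      have h2 := hG.1.eigenvalues_mem_spectrum_real ⟨0, hn⟩
      exact le_of_lt (lt_of_lt_of_le h1 (hg_max _ h2))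
  set E : Matrix (Fin n) (Fin n) ℝ := NormedSpace.exp (τ • A) with hE
  set S : Matrix (Fin n) (Fin n) ℝ := (hG.posSemidef.1.eigenvectorUnitary : Matrix (Fin n) (Fin n) ℝ) *
          diagonal ((RCLike.ofReal : ℝ → ℝ) ∘ Real.sqrt ∘ hG.posSemidef.1.eigenvalues) *
          (star hG.posSemidef.1.eigenvectorUnitary : Matrix (Fin n) (Fin n) ℝ) with hS
  set T : ℝ := ((S⁻¹ * C)ᵀ * (S⁻¹ * C)).trace with hT
  have hexp2 : Real.exp (-(2*lam*τ)) = Real.exp (-lam*τ)^2 := by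
    rw [sq, ← Real.exp_add]
    congr 1
    ring
  have hLtr : ((E * C)ᵀ * (E * C)).trace
      = ∑ j, (E *ᵥ (fun i => C i j)) ⬝ᵥ (E *ᵥ (fun i => C i j)) := by
    rw [lyap_trace_col]
    exact Finset.sum_congr rfl fun j _ => by rw [lyap_col_mul]
  have hRtr : T = ∑ j, ((fun i => C i j) ⬝ᵥ (G⁻¹ *ᵥ (fun i => C i j))) := by
    rw [hT, lyap_trace_col]
    refine Finset.sum_congr rfl fun j _ => ?_
    rw [lyap_col_mul]
    exact lyap_dot_inv_sqrt G hG _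
  have hT0 : 0 ≤ T := by
    rw [hT, lyap_trace_col]
    refine Finset.sum_nonneg fun j _ => ?_
    exact Finset.sum_nonneg fun i _ => mul_self_nonneg _
  have hcol : ∀ j : Fin n,
      (E *ᵥ (fun i => C i j)) ⬝ᵥ (E *ᵥ (fun i => C i j))
        ≤ Real.exp (-lam*τ)^2 * (g * ((fun i => C i j) ⬝ᵥ (G⁻¹ *ᵥ (fun i => C i j)))) := by
    intro j
    set c : Fin n → ℝ := fun i => C i j with hc
    have h1 := lyap_dot_le_g G hG g hg_max (E *ᵥ c)
    have h2 := lyap_decay A G lam hGs hG hLyap c hτ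
    have hmul : Real.exp (-(2*lam*τ)) * Real.exp (2*lam*τ) = 1 := by
      rw [← Real.exp_add]; simp
    have hq : (E *ᵥ c) ⬝ᵥ (G⁻¹ *ᵥ (E *ᵥ c)) ≤ Real.exp (-(2*lam*τ)) * (c ⬝ᵥ (G⁻¹ *ᵥ c)) := by
      have h3 := mul_le_mul_of_nonneg_left h2 (Real.exp_nonneg (-(2*lam*τ)))
      rw [← mul_assoc, hmul, one_mul] at h3
      exact h3
    calc (E *ᵥ c) ⬝ᵥ (E *ᵥ c) ≤ g * ((E *ᵥ c) ⬝ᵥ (G⁻¹ *ᵥ (E *ᵥ c))) := h1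
      _ ≤ g * (Real.exp (-(2*lam*τ)) * (c ⬝ᵥ (G⁻¹ *ᵥ c))) :=
          mul_le_mul_of_nonneg_left hq hg0
      _ = Real.exp (-lam*τ)^2 * (g * (c ⬝ᵥ (G⁻¹ *ᵥ c))) := by rw [hexp2]; ring
  have htr : ((E * C)ᵀ * (E * C)).trace ≤ Real.exp (-lam*τ)^2 * (g * T) := by
    rw [hLtr, hRtr]
    calc (∑ j, (E *ᵥ (fun i => C i j)) ⬝ᵥ (E *ᵥ (fun i => C i j)))
        ≤ ∑ j, Real.exp (-lam*τ)^2 * (g * ((fun i => C i j) ⬝ᵥ (G⁻¹ *ᵥ (fun i => C i j)))) :=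
          Finset.sum_le_sum fun j _ => hcol j
      _ = Real.exp (-lam*τ)^2 * (g * ∑ j, ((fun i => C i j) ⬝ᵥ (G⁻¹ *ᵥ (fun i => C i j)))) := by
          rw [Finset.mul_sum, Finset.mul_sum]
  have hsq := Real.sqrt_le_sqrt htr
  refine le_trans hsq ?_
  rw [Real.sqrt_mul (sq_nonneg _), Real.sqrt_sq (Real.exp_nonneg _), Real.sqrt_mul hg0,
    ← mul_assoc]
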